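/- arXiv:2409.02463 — 6 statements merged into one kernel-verified Lean document; each statement's English description precedes it below -/
import Mathlib

section
/- Two finite multisets A and B of complex numbers, of sizes m and n respectively with m ≤ n, satisfy Σ_{a∈A} a^ℓ = Σ_{b∈B} b^ℓ for all ℓ = 0, 1, ..., n−1 if and only if B equals A together with n−m copies of 0. In particular, if the power sums agree for all ℓ ≥ 0 up to n−1 then the nonzero elements of A and B coincide as multisets. -/
open Multiset Polynomial

private lemma exists_fin_fun (S : Multiset ℂ) :
    ∃ f : Fin (Multiset.card S) → ℂ, Multiset.map f Finset.univ.val = S := by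
  refine ⟨fun i => S.toList.get (Fin.cast (by simp) i), ?_⟩
  conv_rhs => rw [← S.coe_toList]
  have h1 : (Finset.univ.val : Multiset (Fin (Multiset.card S)))
      = (List.finRange (Multiset.card S) : List (Fin (Multiset.card S))) := rfl
  rw [h1, Multiset.map_coe, Multiset.coe_eq_coe]
  have : (List.finRange (Multiset.card S)).map (fun i => S.toList.get (Fin.cast (by simp) i))
      = S.toList := by
    apply List.ext_get
    · simp
    · intro i h1 h2; simp
  rw [this]

private lemma aeval_psum (n : ℕ) (f : Fin n → ℂ) (k : ℕ) :
    MvPolynomial.aeval f (MvPolynomial.psum (Fin n) ℂ k)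
      = ((Multiset.map f Finset.univ.val).map (fun x => x ^ k)).sum := by
  simp only [MvPolynomial.psum, map_sum, map_pow, MvPolynomial.aeval_X,
    Multiset.map_map, Function.comp]
  rfl

/-- Newton's identity for multisets of complex numbers. -/
private lemma multiset_newton (S : Multiset ℂ) (k : ℕ) :
    (k : ℂ) * S.esymm k = (-1) ^ (k + 1) *
      ∑ a ∈ Finset.HasAntidiagonal.antidiagonal k with a.1 < k,
        (-1) ^ a.1 * S.esymm a.1 * ((S.map (fun x => x ^ a.2)).sum) := by
  obtain ⟨f, hf⟩ := exists_fin_fun S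
  have h := congrArg (MvPolynomial.aeval f)
    (MvPolynomial.mul_esymm_eq_sum (Fin (Multiset.card S)) ℂ k)
  simp only [map_mul, map_pow, map_sum, map_natCast, map_neg, map_one,
    MvPolynomial.aeval_esymm_eq_multiset_esymm, aeval_psum, hf] at h
  exact h

private lemma esymm_eq_of_psum (S T : Multiset ℂ) (n : ℕ)
    (h : ∀ ℓ : ℕ, 1 ≤ ℓ → ℓ ≤ n →
        (S.map (fun a => a ^ ℓ)).sum = (T.map (fun b => b ^ ℓ)).sum) :
    ∀ k, k ≤ n → S.esymm k = T.esymm k := by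
  intro k
  induction k using Nat.strong_induction_on with
  | _ k ih =>
    intro hk
    rcases Nat.eq_zero_or_pos k with rfl | hk0
    · simp [Multiset.esymm]
    · have hkC : (k : ℂ) ≠ 0 := Nat.cast_ne_zero.mpr hk0.ne'
      apply mul_left_cancel₀ hkC
      rw [multiset_newton, multiset_newton]
      congr 1
      apply Finset.sum_congr rfl
      intro a ha
      simp only [Finset.mem_filter, Finset.HasAntidiagonal.mem_antidiagonal] at ha
      have h1 : a.1 < k := ha.2
      rw [ih a.1 h1 (le_trans h1.le hk), h a.2 (by omega) (by omega)]

private lemma multiset_eq_of_esymm (S T : Multiset ℂ) (n : ℕ) (hS : Multiset.card S = n)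
    (hT : Multiset.card T = n) (he : ∀ k, k ≤ n → S.esymm k = T.esymm k) : S = T := by
  have hprod : (S.map (fun a => X - C a)).prod = (T.map (fun a => X - C a)).prod := by
    ext k
    by_cases hk : k ≤ n
    · rw [Multiset.prod_X_sub_C_coeff S (hS ▸ hk), Multiset.prod_X_sub_C_coeff T (hT ▸ hk),
        hS, hT, he (n - k) (by omega)]
    · push_neg at hk
      rw [Polynomial.coeff_eq_zero_of_natDegree_lt, Polynomial.coeff_eq_zero_of_natDegree_lt]
      · rw [Polynomial.natDegree_multiset_prod_X_sub_C_eq_card, hT]; exact hk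
      · rw [Polynomial.natDegree_multiset_prod_X_sub_C_eq_card, hS]; exact hk
  have hr : ∀ U : Multiset ℂ, ((U.map (fun a => X - C a)).prod).roots = U := by
    intro U
    rw [Polynomial.roots_multiset_prod]
    · simp only [Multiset.bind_map, roots_X_sub_C]
      simpa using Multiset.bind_singleton (s := U) (id : ℂ → ℂ)
    · simp only [Multiset.mem_map]
      rintro ⟨a, -, ha⟩
      exact X_sub_C_ne_zero a ha
  rw [← hr S, ← hr T, hprod]

private lemma psum_add_zeros (A : Multiset ℂ) (k ℓ : ℕ) (hℓ : 1 ≤ ℓ) :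
    ((A + Multiset.replicate k (0 : ℂ)).map (fun a => a ^ ℓ)).sum
      = (A.map (fun a => a ^ ℓ)).sum := by
  rw [Multiset.map_add, Multiset.sum_add, Multiset.map_replicate]
  have : (0 : ℂ) ^ ℓ = 0 := zero_pow (by omega)
  rw [this, Multiset.sum_replicate, smul_zero, add_zero]

/-- Two finite multisets `A`, `B` of complex numbers of sizes `m ≤ n`
have equal power sums `∑ a^ℓ` for `ℓ = 1, …, n` if and only if `B` is `A` together with
`n - m` copies of `0`.  (In particular the nonzero elements of `A` and `B` then coincide
as multisets.) -/
theorem multiset_power_sums_eq_iff_eq_add_zeros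
    (A B : Multiset ℂ) (m n : ℕ) (hA : Multiset.card A = m) (hB : Multiset.card B = n)
    (hmn : m ≤ n) :
    (∀ ℓ : ℕ, 1 ≤ ℓ → ℓ ≤ n →
        (A.map (fun a => a ^ ℓ)).sum = (B.map (fun b => b ^ ℓ)).sum) ↔
      B = A + Multiset.replicate (n - m) 0 := by
  constructor
  · intro h
    refine (multiset_eq_of_esymm B (A + Multiset.replicate (n - m) 0) n hB ?_ ?_).symm.symm
    · simp [hA]; omega
    · apply esymm_eq_of_psum
      intro ℓ h1 h2
      rw [psum_add_zeros A (n - m) ℓ h1]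
      exact (h ℓ h1 h2).symm
  · intro h ℓ h1 h2
    rw [h, psum_add_zeros A (n - m) ℓ h1]
end

section
/- Let Γ be a finite graph with combined voltage assignment (α,ω) in a finite group G. Left multiplication by elements of G, g·(u,hG_u) := (u, ghG_u) on vertices and g·(a,h) := (a, gh) on arcs, defines an action of G on the factored lift Γ^(α,ω) by graph automorphisms, and this action is free on the arc set. -/
open scoped Classical

/-- Left multiplication `g • (u, hG_u) = (u, ghG_u)` on vertices and
`g • (a, h) = (a, gh)` on arcs defines an action of `G` on the factored lift by graph
automorphisms (bijections of vertices and arcs preserving tails and heads, satisfying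
the action laws), and this action is free on the arc set. -/
theorem factored_lift_group_action_free_on_arcs
    (V A : Type) [Fintype V] [Fintype A]
    (G : Type) [Group G] [Fintype G]
    (tail head : A → V) (rev : A → A)
    (hrev : ∀ a, rev (rev a) = a) (hrevtail : ∀ a, tail (rev a) = head a)
    (α : A → G) (hα : ∀ a, α (rev a) = (α a)⁻¹)
    (ω : V → Subgroup G) :
    let LV := Σ u : V, G ⧸ ω u
    let ltail : A × G → LV := fun p => ⟨tail p.1, QuotientGroup.mk p.2⟩
    let lhead : A × G → LV := fun p => ⟨head p.1, QuotientGroup.mk (p.2 * α p.1)⟩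
    let vmap : G → LV → LV := fun g x => ⟨x.1, g • x.2⟩
    let amap : G → A × G → A × G := fun g p => (p.1, g * p.2)
    (∀ g : G, Function.Bijective (vmap g) ∧ Function.Bijective (amap g)) ∧
    (∀ (g : G) (p : A × G),
        ltail (amap g p) = vmap g (ltail p) ∧ lhead (amap g p) = vmap g (lhead p)) ∧
    (∀ x : LV, vmap 1 x = x) ∧ (∀ p : A × G, amap 1 p = p) ∧
    (∀ (g g' : G) (x : LV), vmap (g * g') x = vmap g (vmap g' x)) ∧
    (∀ (g g' : G) (p : A × G), amap (g * g') p = amap g (amap g' p)) ∧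
    (∀ (g : G) (p : A × G), amap g p = p → g = 1) := by
  intro LV ltail lhead vmap amap
  have hvm : ∀ (g h : G) (u : V), (g • (QuotientGroup.mk h : G ⧸ ω u)) = QuotientGroup.mk (g * h) := fun g h u => rfl
  refine ⟨?_, ?_, ?_, ?_, ?_, ?_, ?_⟩
  · intro g
    constructor
    · rw [Function.bijective_iff_has_inverse]
      refine ⟨vmap g⁻¹, ?_, ?_⟩ <;> rintro ⟨u, x⟩ <;>
        simp [vmap, ← mul_smul]
    · rw [Function.bijective_iff_has_inverse]
      refine ⟨amap g⁻¹, ?_, ?_⟩ <;> rintro ⟨a, h⟩ <;>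
        simp [amap, ← mul_assoc]
  · intro g p
    constructor
    · simp only [ltail, vmap, amap, hvm]
    · simp only [lhead, vmap, amap, hvm, mul_assoc]
  · rintro ⟨u, x⟩; simp [vmap]
  · intro p; simp [amap]
  · rintro g g' ⟨u, x⟩; simp [vmap, mul_smul]
  · intro g g' p; simp [amap, mul_assoc]
  · intro g p hp
    have := congrArg Prod.snd hp
    simpa [amap] using this
end

section
/- Let Γ be a finite graph on vertex set V with combined voltage assignment (α,ω) in a finite group G, and let B be the V×V matrix over the complex group algebra ℂ[G] with entries B_{u,v} = (Σ_{g∈G_u} g)·Σ_{a∈arcs(u,v)} α(a). If the (u,u) entry of B^ℓ is written as Σ_{g∈G} b_g^(ℓ) g, then b_e^(ℓ) = b_g^(ℓ) for every g ∈ G_u, where e is the identity of G. -/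
open scoped Classical

/-- Let `B` be the `V × V` matrix over the group algebra `ℂ[G]` with
entries `B u v = (∑_{h ∈ ω u} h) · ∑_{a ∈ arcs(u,v)} α(a)`.  If the `(u,u)` entry of
`B ^ ℓ` (for `ℓ = m + 1 ≥ 1`) is `∑_{g ∈ G} b_g g`, then `b_e = b_g`
for every `g ∈ G_u = ω u`. -/
theorem group_algebra_matrix_power_diagonal_coeff_invariant
    (V A : Type) [Fintype V] [Fintype A]
    (G : Type) [Group G] [Fintype G]
    (tail head : A → V) (rev : A → A)
    (hrev : ∀ a, rev (rev a) = a) (hrevtail : ∀ a, tail (rev a) = head a)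
    (α : A → G) (hα : ∀ a, α (rev a) = (α a)⁻¹)
    (ω : V → Subgroup G)
    (u : V) (m : ℕ) (g : G) (hg : g ∈ ω u) :
    let B : Matrix V V (MonoidAlgebra ℂ G) := fun x y =>
      (∑ h : ω x, MonoidAlgebra.of ℂ G (h : G)) *
        ∑ a ∈ Finset.univ.filter (fun a : A => tail a = x ∧ head a = y),
          MonoidAlgebra.of ℂ G (α a)
    ((B ^ (m + 1)) u u).coeff 1 = ((B ^ (m + 1)) u u).coeff g := by
  intro B
  set X : MonoidAlgebra ℂ G := ∑ w : V,
      ((∑ a ∈ Finset.univ.filter (fun a : A => tail a = u ∧ head a = w),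
          MonoidAlgebra.of ℂ G (α a)) * (B ^ m) w u) with hXdef
  have hpow : (B ^ (m + 1)) u u =
      (∑ h : ω u, MonoidAlgebra.of ℂ G (h : G)) * X := by
    rw [pow_succ', Matrix.mul_apply, hXdef, Finset.mul_sum]
    refine Finset.sum_congr rfl fun w _ => ?_
    simp [B, mul_assoc]
  have key : ∀ g₀ : G, ((∑ h : ω u, MonoidAlgebra.of ℂ G (h : G)) * X).coeff g₀
      = ∑ h : ω u, X.coeff ((h : G)⁻¹ * g₀) := by
    intro g₀
    rw [Finset.sum_mul, MonoidAlgebra.coeff_sum, Finset.sum_apply']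
    refine Finset.sum_congr rfl fun h _ => ?_
    simpa using MonoidAlgebra.coeff_single_mul_apply X (1 : ℂ) (h : G) g₀
  rw [hpow, key, key]
  refine Fintype.sum_equiv (Equiv.mulLeft (⟨g, hg⟩ : ω u)) _ _ fun h => ?_
  simp [mul_assoc]
end

section
/- Let Γ be a finite graph on vertex set V with combined voltage assignment (α,ω) in a finite group G, and let B be the matrix over ℂ[G] with entries B_{u,v} = (Σ_{g∈G_u} g)·Σ_{a∈arcs(u,v)} α(a). Write (B^ℓ)_{u,u} = Σ_{g∈G} b_g^(ℓ) g. Then the number of closed walks of length ℓ in the factored lift Γ^(α,ω) rooted at the vertex (u, G_u) equals |G_u| · b_e^(ℓ). -/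
open scoped Classical

section FLAux

variable {V A G : Type} [Group G]

lemma sigma_quot_eq (ω : V → Subgroup G) {x y : V} (s t : G) :
    (⟨x, QuotientGroup.mk s⟩ : Σ v, G ⧸ ω v) = ⟨y, QuotientGroup.mk t⟩ ↔
      x = y ∧ s⁻¹ * t ∈ ω x := by
  constructor
  · intro h
    obtain ⟨h1, h2⟩ := Sigma.mk.inj_iff.mp h
    subst h1
    exact ⟨rfl, QuotientGroup.eq.mp (eq_of_heq h2)⟩
  · rintro ⟨rfl, h⟩
    exact congrArg (Sigma.mk x) (QuotientGroup.eq.mpr h)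

/-- `Fin` arithmetic helpers. -/
lemma fin_zero_sub_one (n : ℕ) : (0 : Fin (n + 1)) - 1 = Fin.last n :=
  (eq_sub_of_add_eq (Fin.last_add_one n)).symm

lemma fin_succ_sub_one {n : ℕ} (j : Fin n) : (j.succ : Fin (n + 1)) - 1 = j.castSucc := by
  have hj := j.isLt
  ext
  rw [Fin.sub_def]
  simp only [Fin.val_one', Fin.val_succ, Fin.coe_castSucc]
  show (n + 1 - 1 % (n + 1) + (j.val + 1)) % (n + 1) = j.val
  rw [show n + 1 - 1 % (n + 1) + (j.val + 1) = (n + 1) + j.val by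
    rw [Nat.mod_eq_of_lt (by omega)]; omega, Nat.add_mod_left,
    Nat.mod_eq_of_lt (by omega)]

lemma fin_castSucc_add_one {n : ℕ} (j : Fin n) :
    (j.castSucc : Fin (n + 1)) + 1 = j.succ := by
  have hj := j.isLt
  ext
  rw [Fin.add_def]
  simp only [Fin.val_one', Fin.val_succ, Fin.coe_castSucc]
  show (j.val + 1 % (n + 1)) % (n + 1) = j.val + 1
  rw [Nat.mod_eq_of_lt (show (1:ℕ) < n + 1 by omega), Nat.mod_eq_of_lt (by omega)]

/-- Telescoping of partial products. -/
lemma fl_telescope {n : ℕ} (f : Fin (n + 1) → G) (j : Fin (n + 1)) :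
    f (Fin.last n) * Fin.partialProd (fun i => (f (i - 1))⁻¹ * f i) j.castSucc
      = f (j - 1) := by
  induction j using Fin.induction with
  | zero =>
    rw [Fin.castSucc_zero, Fin.partialProd_zero, mul_one, fin_zero_sub_one]
  | succ i ih =>
    rw [← Fin.succ_castSucc, Fin.partialProd_succ, ← mul_assoc, ih, fin_succ_sub_one,
      mul_inv_cancel_left]

lemma fl_telescope_full {n : ℕ} (f : Fin (n + 1) → G) :
    Fin.partialProd (fun i => (f (i - 1))⁻¹ * f i) (Fin.last (n + 1)) = 1 := by
  rw [← Fin.succ_last, Fin.partialProd_succ]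
  have h2 : Fin.partialProd (fun i => (f (i - 1))⁻¹ * f i) (Fin.last n).castSucc
      = (f (Fin.last n))⁻¹ * f (Fin.last n - 1) := by
    rw [← fl_telescope f (Fin.last n)]; group
  rw [h2]
  group

def wstep (α : A → G) (p : A × G) : G := p.2 * α p.1

def Pprod (α : A → G) {n : ℕ} (q : Fin n → A × G) : G :=
  (List.ofFn fun j => wstep α (q j)).prod

def Cond (tail head : A → V) (ω : V → Subgroup G) (n : ℕ) (x y : V)
    (q : Fin (n + 1) → A × G) : Prop :=
  tail (q 0).1 = x ∧ head (q (Fin.last n)).1 = y ∧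
    (∀ j : Fin n, head (q j.castSucc).1 = tail (q j.succ).1) ∧
    ∀ j, (q j).2 ∈ ω (tail (q j).1)

lemma Pprod_cons (α : A → G) {n : ℕ} (p : A × G) (q : Fin n → A × G) :
    Pprod α (Fin.cons p q) = wstep α p * Pprod α q := by
  simp [Pprod, List.ofFn_succ]

lemma Pprod_eq_partialProd (α : A → G) {n : ℕ} (q : Fin n → A × G) :
    Pprod α q = Fin.partialProd (fun j => wstep α (q j)) (Fin.last n) := by
  simp only [Pprod, Fin.partialProd, Fin.val_last]
  rw [List.take_of_length_le (by simp)]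

lemma Cond_cons (tail head : A → V) (ω : V → Subgroup G) (n : ℕ) (x y : V)
    (p : A × G) (q : Fin (n + 1) → A × G) :
    Cond tail head ω (n + 1) x y (Fin.cons p q) ↔
      (tail p.1 = x ∧ head p.1 = tail (q 0).1 ∧ p.2 ∈ ω (tail p.1)) ∧
        Cond tail head ω n (tail (q 0).1) y q := by
  unfold Cond
  rw [Fin.forall_fin_succ (P := fun j : Fin (n + 1) =>
      head ((Fin.cons p q : Fin (n+2) → A × G) j.castSucc).1 =
        tail ((Fin.cons p q : Fin (n+2) → A × G) j.succ).1),
    Fin.forall_fin_succ (P := fun j : Fin (n + 2) =>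
      ((Fin.cons p q : Fin (n+2) → A × G) j).2 ∈
        ω (tail ((Fin.cons p q : Fin (n+2) → A × G) j).1))]
  simp only [Fin.cons_zero, Fin.cons_succ, Fin.castSucc_zero, Fin.succ_castSucc,
    Fin.succ_last]
  tauto

/-- The predicate for a rooted closed walk in the factored lift, in explicit form. -/
def WalkP (tail head : A → V) (α : A → G) (ω : V → Subgroup G) (u : V) (m : ℕ)
    (p : Fin (m + 1) → A × G) : Prop :=
  (tail (p 0).1 = u ∧ (p 0).2⁻¹ * 1 ∈ ω (tail (p 0).1)) ∧
    ∀ j : Fin (m + 1), head (p j).1 = tail (p (j + 1)).1 ∧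
      ((p j).2 * α (p j).1)⁻¹ * (p (j + 1)).2 ∈ ω (head (p j).1)

def Psi (α : A → G) {m : ℕ} (p : Fin (m + 1) → A × G) : Fin (m + 1) → A × G :=
  fun j => ((p j).1, (wstep α (p (j - 1)))⁻¹ * (p j).2)

def Phi (α : A → G) {m : ℕ} (k : G) (q : Fin (m + 1) → A × G) : Fin (m + 1) → A × G :=
  fun j => ((q j).1, k * Fin.partialProd (fun i => wstep α (q i)) j.castSucc * (q j).2)

section WalkSide

variable {tail head : A → V} {α : A → G} {ω : V → Subgroup G} {u : V} {m : ℕ}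

lemma walk_facts {p : Fin (m + 1) → A × G} (hp : WalkP tail head α ω u m p) :
    (∀ j, head (p j).1 = tail (p (j + 1)).1) ∧
    (∀ j : Fin (m + 1), (wstep α (p (j - 1)))⁻¹ * (p j).2 ∈ ω (tail (p j).1)) ∧
    tail (p 0).1 = u ∧ (p 0).2 ∈ ω u ∧ wstep α (p (Fin.last m)) ∈ ω u := by
  obtain ⟨⟨h0, h0'⟩, hchain⟩ := hp
  have F1 : ∀ j, head (p j).1 = tail (p (j + 1)).1 := fun j => (hchain j).1
  have F2 : ∀ j : Fin (m + 1), (wstep α (p (j - 1)))⁻¹ * (p j).2 ∈ ω (tail (p j).1) := by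
    intro j
    have h := (hchain (j - 1)).2
    rw [F1 (j - 1), sub_add_cancel] at h
    exact h
  rw [mul_one] at h0'
  have hg0 : (p 0).2 ∈ ω u := by
    rw [h0] at h0'; exact (inv_mem_iff).mp h0'
  have hk : wstep α (p (Fin.last m)) ∈ ω u := by
    have h := F2 0
    rw [fin_zero_sub_one, h0] at h
    have he : wstep α (p (Fin.last m))
        = (p 0).2 * ((wstep α (p (Fin.last m)))⁻¹ * (p 0).2)⁻¹ := by group
    rw [he]
    exact mul_mem hg0 (inv_mem h)
  exact ⟨F1, F2, h0, hg0, hk⟩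

lemma Psi_spec {p : Fin (m + 1) → A × G} (hp : WalkP tail head α ω u m p) :
    Cond tail head ω m u u (Psi α p) ∧ Pprod α (Psi α p) = 1 := by
  obtain ⟨F1, F2, h0, hg0, hk⟩ := walk_facts hp
  constructor
  · refine ⟨h0, ?_, ?_, ?_⟩
    · show head (p (Fin.last m)).1 = u
      rw [F1, Fin.last_add_one, h0]
    · intro j
      show head (p j.castSucc).1 = tail (p j.succ).1
      rw [F1, fin_castSucc_add_one]
    · intro j
      exact F2 j
  · have hfun : (fun j => wstep α (Psi α p j))
        = fun i => (wstep α (p (i - 1)))⁻¹ * wstep α (p i) := by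
      funext i
      show ((wstep α (p (i - 1)))⁻¹ * (p i).2) * α (p i).1 = _
      rw [mul_assoc]
      rfl
    rw [Pprod_eq_partialProd, hfun]
    exact fl_telescope_full (fun t => wstep α (p t))

lemma Phi_w (k : G) (q : Fin (m + 1) → A × G) (j : Fin (m + 1)) :
    wstep α (Phi α k q j) = k * Fin.partialProd (fun i => wstep α (q i)) j.succ := by
  show (k * Fin.partialProd (fun i => wstep α (q i)) j.castSucc * (q j).2) * α (q j).1
    = _
  rw [Fin.partialProd_succ]
  show _ = k * (Fin.partialProd (fun i => wstep α (q i)) j.castSucc * ((q j).2 * α (q j).1))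
  group

lemma Phi_full (k : G) {q : Fin (m + 1) → A × G} (hq1 : Pprod α q = 1) :
    wstep α (Phi α k q (Fin.last m)) = k := by
  rw [Phi_w, Fin.succ_last, ← Pprod_eq_partialProd, hq1, mul_one]

lemma pp_sub_one {q : Fin (m + 1) → A × G} (hq1 : Pprod α q = 1) (j : Fin (m + 1)) :
    Fin.partialProd (fun i => wstep α (q i)) (j - 1).succ
      = Fin.partialProd (fun i => wstep α (q i)) j.castSucc := by
  induction j using Fin.cases with
  | zero =>
    rw [fin_zero_sub_one, Fin.succ_last, ← Pprod_eq_partialProd, hq1,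
      Fin.castSucc_zero, Fin.partialProd_zero]
  | succ i =>
    rw [fin_succ_sub_one, Fin.succ_castSucc]

lemma pp_add_one {q : Fin (m + 1) → A × G} (hq1 : Pprod α q = 1) (j : Fin (m + 1)) :
    Fin.partialProd (fun i => wstep α (q i)) (j + 1).castSucc
      = Fin.partialProd (fun i => wstep α (q i)) j.succ := by
  induction j using Fin.lastCases with
  | last =>
    rw [Fin.last_add_one, Fin.castSucc_zero, Fin.partialProd_zero, Fin.succ_last,
      ← Pprod_eq_partialProd, hq1]
  | cast i =>
    rw [fin_castSucc_add_one, Fin.succ_castSucc]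

lemma Phi_spec {k : G} (hk : k ∈ ω u) {q : Fin (m + 1) → A × G}
    (hq : Cond tail head ω m u u q) (hq1 : Pprod α q = 1) :
    WalkP tail head α ω u m (Phi α k q) := by
  obtain ⟨hq0, hqlast, hchain, hmem⟩ := hq
  have hF1 : ∀ j : Fin (m + 1), head (q j).1 = tail (q (j + 1)).1 := by
    intro j
    induction j using Fin.lastCases with
    | last => rw [Fin.last_add_one, hq0, hqlast]
    | cast i => rw [fin_castSucc_add_one]; exact hchain i
  refine ⟨⟨hq0, ?_⟩, ?_⟩
  · show (k * Fin.partialProd (fun i => wstep α (q i)) (Fin.castSucc 0) * (q 0).2)⁻¹ * 1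
      ∈ ω (tail (q 0).1)
    rw [Fin.castSucc_zero, Fin.partialProd_zero]
    have he : (k * 1 * (q 0).2)⁻¹ * 1 = ((q 0).2)⁻¹ * k⁻¹ := by group
    rw [he]
    exact mul_mem (inv_mem (hmem 0)) (inv_mem (by rw [hq0]; exact hk))
  · intro j
    refine ⟨hF1 j, ?_⟩
    show (wstep α (Phi α k q j))⁻¹ * (Phi α k q (j + 1)).2 ∈ ω (head (q j).1)
    rw [Phi_w]
    show _ * (k * Fin.partialProd (fun i => wstep α (q i)) (j + 1).castSucc * (q (j + 1)).2)
      ∈ _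
    rw [pp_add_one hq1]
    have he : (k * Fin.partialProd (fun i => wstep α (q i)) j.succ)⁻¹ *
        (k * Fin.partialProd (fun i => wstep α (q i)) j.succ * (q (j + 1)).2)
        = (q (j + 1)).2 := by group
    rw [he, hF1 j]
    exact hmem (j + 1)

lemma Psi_Phi {k : G} {q : Fin (m + 1) → A × G} (hq1 : Pprod α q = 1) :
    Psi α (Phi α k q) = q := by
  funext j
  refine Prod.ext rfl ?_
  show (wstep α (Phi α k q (j - 1)))⁻¹ * (Phi α k q j).2 = (q j).2
  rw [Phi_w]
  show _ * (k * Fin.partialProd (fun i => wstep α (q i)) j.castSucc * (q j).2) = _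
  rw [pp_sub_one hq1]
  group

lemma Phi_Psi {p : Fin (m + 1) → A × G} :
    Phi α (wstep α (p (Fin.last m))) (Psi α p) = p := by
  funext j
  refine Prod.ext rfl ?_
  show wstep α (p (Fin.last m)) *
      Fin.partialProd (fun i => wstep α (Psi α p i)) j.castSucc * (Psi α p j).2
    = (p j).2
  have hfun : (fun i => wstep α (Psi α p i))
      = fun i => (wstep α (p (i - 1)))⁻¹ * wstep α (p i) := by
    funext i
    show ((wstep α (p (i - 1)))⁻¹ * (p i).2) * α (p i).1 = _
    rw [mul_assoc]
    rfl
  rw [hfun, fl_telescope (fun t => wstep α (p t)) j]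
  show wstep α (p (j - 1)) * ((wstep α (p (j - 1)))⁻¹ * (p j).2) = (p j).2
  exact mul_inv_cancel_left _ _

end WalkSide

noncomputable def walkEquiv (tail head : A → V) (α : A → G) (ω : V → Subgroup G)
    (u : V) (m : ℕ) :
    {p : Fin (m + 1) → A × G // WalkP tail head α ω u m p} ≃
      (ω u) × {q : Fin (m + 1) → A × G // Cond tail head ω m u u q ∧ Pprod α q = 1} where
  toFun p := ⟨⟨wstep α (p.1 (Fin.last m)), (walk_facts p.2).2.2.2.2⟩,
    ⟨Psi α p.1, Psi_spec p.2⟩⟩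
  invFun kq := ⟨Phi α (kq.1 : G) kq.2.1, Phi_spec kq.1.2 kq.2.2.1 kq.2.2.2⟩
  left_inv p := Subtype.ext Phi_Psi
  right_inv := by
    rintro ⟨⟨k, hk⟩, ⟨q, hq⟩⟩
    refine Prod.ext (Subtype.ext ?_) (Subtype.ext ?_)
    · exact Phi_full k hq.2
    · exact Psi_Phi hq.2

variable [Fintype V] [Fintype A] [Fintype G]

noncomputable def Bmat (tail head : A → V) (α : A → G) (ω : V → Subgroup G) :
    Matrix V V (MonoidAlgebra ℂ G) := fun x y =>
  (∑ h : ω x, MonoidAlgebra.of ℂ G (h : G)) *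
    ∑ a ∈ Finset.univ.filter (fun a : A => tail a = x ∧ head a = y),
      MonoidAlgebra.of ℂ G (α a)

lemma Bmat_apply (tail head : A → V) (α : A → G) (ω : V → Subgroup G) (x y : V) :
    Bmat tail head α ω x y = ∑ p : A × G,
      if tail p.1 = x ∧ head p.1 = y ∧ p.2 ∈ ω (tail p.1)
      then MonoidAlgebra.of ℂ G (wstep α p) else 0 := by
  have h0 : (∑ h : ω x, MonoidAlgebra.of ℂ G (h : G))
      = ∑ g : G, if g ∈ ω x then MonoidAlgebra.of ℂ G g else 0 := by
    rw [← Finset.sum_filter]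
    exact (Finset.sum_subtype _ (by simp) _).symm
  show (∑ h : ω x, MonoidAlgebra.of ℂ G (h : G)) * _ = _
  rw [h0, Finset.sum_filter, Finset.sum_mul_sum, Finset.sum_comm,
    Fintype.sum_prod_type]
  apply Finset.sum_congr rfl
  intro a _
  apply Finset.sum_congr rfl
  intro g _
  rw [ite_zero_mul_ite_zero]
  by_cases h1 : tail a = x
  · by_cases h2 : head a = y
    · by_cases h3 : g ∈ ω x
      · rw [if_pos ⟨h3, h1, h2⟩, if_pos ⟨h1, h2, h1 ▸ h3⟩, wstep, ← map_mul]
      · rw [if_neg (by tauto), if_neg (by rw [h1]; tauto)]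
    · rw [if_neg (by tauto), if_neg (by tauto)]
  · rw [if_neg (by tauto), if_neg (by tauto)]

lemma lemA (tail head : A → V) (α : A → G) (ω : V → Subgroup G) (n : ℕ) (x y : V) :
    (Bmat tail head α ω ^ (n + 1)) x y
      = ∑ q : Fin (n + 1) → A × G,
          if Cond tail head ω n x y q then MonoidAlgebra.of ℂ G (Pprod α q) else 0 := by
  induction n generalizing x y with
  | zero =>
    rw [pow_one, Bmat_apply]
    refine Fintype.sum_equiv (Equiv.funUnique (Fin 1) (A × G)).symm _ _ (fun p => ?_)
    have he : ((Equiv.funUnique (Fin 1) (A × G)).symm p) = fun _ => p := rfl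
    rw [he]
    refine if_congr ?_ (by simp [Pprod, wstep]) rfl
    simp only [Cond]
    constructor
    · rintro ⟨h1, h2, h3⟩; exact ⟨h1, h2, fun j => absurd j.2 (by omega), fun _ => h3⟩
    · rintro ⟨h1, h2, _, h4⟩; exact ⟨h1, h2, h4 0⟩
  | succ n ih =>
    rw [pow_succ', Matrix.mul_apply]
    have hz : ∀ z : V, Bmat tail head α ω x z * (Bmat tail head α ω ^ (n + 1)) z y
        = ∑ p : A × G, ∑ q : Fin (n + 1) → A × G,
          if ((tail p.1 = x ∧ head p.1 = z ∧ p.2 ∈ ω (tail p.1)) ∧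
              Cond tail head ω n z y q)
          then MonoidAlgebra.of ℂ G (wstep α p * Pprod α q) else 0 := by
      intro z
      rw [Bmat_apply, ih, Finset.sum_mul_sum]
      refine Finset.sum_congr rfl fun p _ => Finset.sum_congr rfl fun q _ => ?_
      rw [ite_zero_mul_ite_zero, ← map_mul]
    simp only [hz]
    rw [Finset.sum_comm]
    have hcol : ∀ p : A × G, ∑ z : V, ∑ q : Fin (n + 1) → A × G,
        (if ((tail p.1 = x ∧ head p.1 = z ∧ p.2 ∈ ω (tail p.1)) ∧
            Cond tail head ω n z y q)
        then MonoidAlgebra.of ℂ G (wstep α p * Pprod α q) else 0)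
        = ∑ q : Fin (n + 1) → A × G,
          (if ((tail p.1 = x ∧ p.2 ∈ ω (tail p.1)) ∧
              Cond tail head ω n (head p.1) y q)
          then MonoidAlgebra.of ℂ G (wstep α p * Pprod α q) else 0) := by
      intro p
      rw [Finset.sum_comm]
      refine Finset.sum_congr rfl fun q _ => ?_
      rw [Fintype.sum_eq_single (head p.1) (fun z hz' => by
        rw [if_neg]; rintro ⟨⟨-, h2, -⟩, -⟩; exact hz' h2.symm)]
      refine if_congr ?_ rfl rfl
      tauto
    simp only [hcol]
    have hmerge : ∑ pq : (A × G) × (Fin (n + 1) → A × G),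
        (if Cond tail head ω (n + 1) x y (Fin.cons pq.1 pq.2)
          then MonoidAlgebra.of ℂ G (Pprod α (Fin.cons pq.1 pq.2)) else 0)
        = ∑ q : Fin (n + 2) → A × G,
          if Cond tail head ω (n + 1) x y q
            then MonoidAlgebra.of ℂ G (Pprod α q) else 0 :=
      Fintype.sum_equiv (Fin.consEquiv fun _ : Fin (n + 2) => A × G) _ _
        (fun ⟨p, q⟩ => rfl)
    rw [← hmerge]
    rw [Fintype.sum_prod_type (f := fun pq : (A × G) × (Fin (n + 1) → A × G) =>
      if Cond tail head ω (n + 1) x y (Fin.cons pq.1 pq.2)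
        then MonoidAlgebra.of ℂ G (Pprod α (Fin.cons pq.1 pq.2)) else 0)]
    refine Finset.sum_congr rfl fun p _ => Finset.sum_congr rfl fun q _ => ?_
    show (if ((tail p.1 = x ∧ p.2 ∈ ω (tail p.1)) ∧ Cond tail head ω n (head p.1) y q)
        then MonoidAlgebra.of ℂ G (wstep α p * Pprod α q) else 0)
      = (if Cond tail head ω (n + 1) x y (Fin.cons p q)
        then MonoidAlgebra.of ℂ G (Pprod α (Fin.cons p q)) else 0)
    rw [Pprod_cons]
    refine if_congr ?_ rfl rfl
    rw [Cond_cons]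
    constructor
    · rintro ⟨⟨h1, h3⟩, h4⟩
      have h2 : tail (q 0).1 = head p.1 := h4.1
      exact ⟨⟨h1, h2.symm, h3⟩, h2 ▸ h4⟩
    · rintro ⟨⟨h1, h2, h3⟩, h4⟩
      exact ⟨⟨h1, h3⟩, h2 ▸ h4⟩

end FLAux

theorem factored_lift_closed_walk_count
    (V A : Type) [Fintype V] [Fintype A]
    (G : Type) [Group G] [Fintype G]
    (tail head : A → V) (rev : A → A)
    (hrev : ∀ a, rev (rev a) = a) (hrevtail : ∀ a, tail (rev a) = head a)
    (α : A → G) (hα : ∀ a, α (rev a) = (α a)⁻¹)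
    (ω : V → Subgroup G)
    (u : V) (m : ℕ) :
    let LV := Σ x : V, G ⧸ ω x
    let ltail : A × G → LV := fun p => ⟨tail p.1, QuotientGroup.mk p.2⟩
    let lhead : A × G → LV := fun p => ⟨head p.1, QuotientGroup.mk (p.2 * α p.1)⟩
    let B : Matrix V V (MonoidAlgebra ℂ G) := fun x y =>
      (∑ h : ω x, MonoidAlgebra.of ℂ G (h : G)) *
        ∑ a ∈ Finset.univ.filter (fun a : A => tail a = x ∧ head a = y),
          MonoidAlgebra.of ℂ G (α a)
    (Nat.card {p : Fin (m + 1) → A × G //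
        ltail (p 0) = ⟨u, QuotientGroup.mk 1⟩ ∧
        ∀ j : Fin (m + 1), lhead (p j) = ltail (p (j + 1))} : ℂ)
      = (Nat.card (ω u) : ℂ) * ((B ^ (m + 1)) u u).coeff 1 := by
  intro LV ltail lhead B
  have hiff : ∀ p : Fin (m + 1) → A × G,
      (ltail (p 0) = ⟨u, QuotientGroup.mk 1⟩ ∧
        ∀ j : Fin (m + 1), lhead (p j) = ltail (p (j + 1)))
      ↔ WalkP tail head α ω u m p := by
    intro p
    apply and_congr
    · exact sigma_quot_eq ω _ _
    · exact forall_congr' fun j => sigma_quot_eq ω _ _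
  have hB : B = Bmat tail head α ω := rfl
  have hco : ((B ^ (m + 1)) u u).coeff 1
      = ((Nat.card {q : Fin (m + 1) → A × G //
          Cond tail head ω m u u q ∧ Pprod α q = 1} : ℕ) : ℂ) := by
    rw [hB, lemA, MonoidAlgebra.coeff_sum, Finsupp.finset_sum_apply]
    have hterm : ∀ q : Fin (m + 1) → A × G,
        ((if Cond tail head ω m u u q
          then MonoidAlgebra.of ℂ G (Pprod α q) else 0 : MonoidAlgebra ℂ G)).coeff 1
        = if Cond tail head ω m u u q ∧ Pprod α q = 1 then (1 : ℂ) else 0 := by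
      intro q
      by_cases h1 : Cond tail head ω m u u q
      · rw [if_pos h1, MonoidAlgebra.of_apply]
        by_cases h2 : Pprod α q = 1
        · rw [if_pos ⟨h1, h2⟩]
          show (Finsupp.single (Pprod α q) (1:ℂ)) 1 = 1
          rw [Finsupp.single_apply, if_pos h2]
        · rw [if_neg (fun hc => h2 hc.2)]
          show (Finsupp.single (Pprod α q) (1:ℂ)) 1 = 0
          rw [Finsupp.single_apply, if_neg h2]
      · rw [if_neg h1, if_neg (fun hc => h1 hc.1)]
        rfl
    rw [Finset.sum_congr rfl (fun q _ => hterm q), Finset.sum_boole]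
    congr 1
    rw [Nat.card_eq_fintype_card, Fintype.card_subtype]
  rw [Nat.card_congr ((Equiv.subtypeEquivRight hiff).trans
      (walkEquiv tail head α ω u m)), Nat.card_prod, Nat.cast_mul, hco]
end

section
/- Let Γ be a finite graph on k vertices with combined voltage assignment (α,ω) in a finite group G, let ρ be a complex irreducible representation of G of dimension d, and let B(ρ) be the dk×dk block matrix with (u,v) block Σ_{a∈arcs(u,v)} Σ_{h∈G_u} ρ(hα(a)). Then the u-th block-row of B(ρ), viewed as a d×dk matrix, has rank at most rank(Σ_{h∈G_u} ρ(h)); consequently the number of nonzero eigenvalues of B(ρ) (counted with algebraic multiplicity) is at most Σ_{u∈V} rank(Σ_{h∈G_u} ρ(h)). -/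
open scoped Classical
open Polynomial Module

-- rank of sum of matrices
lemma matrix_rank_add_le {m n : Type} [Fintype m] [Fintype n]
    (A B : Matrix m n ℂ) : (A + B).rank ≤ A.rank + B.rank := by
  classical
  have hle : LinearMap.range (A + B).mulVecLin ≤
      LinearMap.range A.mulVecLin ⊔ LinearMap.range B.mulVecLin := by
    rintro x ⟨v, rfl⟩
    exact Submodule.mem_sup.2 ⟨A.mulVecLin v, ⟨v, rfl⟩, B.mulVecLin v, ⟨v, rfl⟩, by
      simp [Matrix.add_mulVec, Matrix.mulVecLin_apply]⟩
  calc (A + B).rank ≤ finrank ℂ ↥(LinearMap.range A.mulVecLin ⊔ LinearMap.range B.mulVecLin) :=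
        Submodule.finrank_mono hle
    _ ≤ A.rank + B.rank := Submodule.finrank_add_le_finrank_add_finrank _ _

lemma matrix_rank_sum_le {m n ι : Type} [Fintype m] [Fintype n] (s : Finset ι)
    (f : ι → Matrix m n ℂ) : (∑ i ∈ s, f i).rank ≤ ∑ i ∈ s, (f i).rank := by
  classical
  induction s using Finset.induction with
  | empty => simp
  | insert _ _ h ih =>
    rw [Finset.sum_insert h, Finset.sum_insert h]
    exact (matrix_rank_add_le _ _).trans (by gcongr)

-- number of nonzero eigenvalues ≤ rank
lemma card_nonzero_roots_le_rank {m : Type} [Fintype m] (M : Matrix m m ℂ) :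
    Multiset.card ((M.charpoly.roots).filter (· ≠ 0)) ≤ M.rank := by
  classical
  set n := Fintype.card m with hn
  set φ := Matrix.toLin' M with hφ
  have hchar : M.charpoly = LinearMap.charpoly φ := by
    rw [← LinearMap.charpoly_toMatrix φ (Pi.basisFun ℂ m),
      LinearMap.toMatrix_eq_toMatrix', hφ, LinearMap.toMatrix'_toLin']
  have hcard : Multiset.card M.charpoly.roots = n := by
    rw [(Polynomial.splits_iff_card_roots).1 (IsAlgClosed.splits _),
      Matrix.charpoly_natDegree_eq_dim]
  have hsplit : Multiset.card (M.charpoly.roots.filter (· ≠ 0))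
      + M.charpoly.roots.count 0 = n := by
    rw [← hcard]
    rw [Multiset.count, Multiset.countP_eq_card_filter]
    rw [← Multiset.card_add, ← Multiset.filter_add_not (· ≠ 0) M.charpoly.roots]
    congr 2
    · rw [Multiset.filter_add_not]
    · rw [Multiset.filter_add_not]
      apply Multiset.filter_congr
      intro x _
      simp [eq_comm]
  have hcount : M.charpoly.roots.count 0 = M.charpoly.natTrailingDegree := by
    rw [Polynomial.count_roots, Polynomial.rootMultiplicity_eq_natTrailingDegree']
  have hker : finrank ℂ (LinearMap.ker φ) ≤ M.charpoly.natTrailingDegree := by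
    rw [hchar, ← LinearMap.finrank_maxGenEigenspace_zero_eq]
    apply Submodule.finrank_mono
    intro x hx
    rw [Module.End.mem_maxGenEigenspace]
    exact ⟨1, by simpa using hx⟩
  have hrn : M.rank + finrank ℂ (LinearMap.ker φ) = n := by
    rw [hφ, Matrix.toLin'_apply', Matrix.rank,
      LinearMap.finrank_range_add_finrank_ker M.mulVecLin, Module.finrank_pi]
  omega

set_option maxHeartbeats 800000 in
/-- Let `B(ρ)` be the `dk × dk` block matrix of a combined voltage
graph with respect to an irreducible representation `ρ` of dimension `d`, whose
`(u,v)` block is `∑_{a ∈ arcs(u,v)} ∑_{h ∈ ω u} ρ(h α(a))`.  Then the `u`-th block-row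
(a `d × dk` matrix) has rank at most `rank (∑_{h ∈ ω u} ρ h)`; consequently the number
of nonzero eigenvalues of `B(ρ)` counted with algebraic multiplicity is at most
`∑_u rank (∑_{h ∈ ω u} ρ h)`. -/
theorem block_matrix_rank_bound_nonzero_eigenvalues
    (V A : Type) [Fintype V] [Fintype A]
    (G : Type) [Group G] [Fintype G]
    (tail head : A → V) (rev : A → A)
    (hrev : ∀ a, rev (rev a) = a) (hrevtail : ∀ a, tail (rev a) = head a)
    (α : A → G) (hα : ∀ a, α (rev a) = (α a)⁻¹)
    (ω : V → Subgroup G)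
    (d : ℕ) (ρ : G →* Matrix (Fin d) (Fin d) ℂ)
    (hirr : ∀ W : Submodule ℂ (Fin d → ℂ),
      (∀ g : G, W.map (Matrix.mulVecLin (ρ g)) ≤ W) → W = ⊥ ∨ W = ⊤) :
    let B : Matrix (V × Fin d) (V × Fin d) ℂ := fun p q =>
      (∑ a ∈ Finset.univ.filter (fun a : A => tail a = p.1 ∧ head a = q.1),
        ∑ h : ω p.1, ρ ((h : G) * α a)) p.2 q.2
    (∀ u : V,
      Matrix.rank (Matrix.of fun (i : Fin d) (q : V × Fin d) => B (u, i) q)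
        ≤ Matrix.rank (∑ h : ω u, ρ (h : G))) ∧
    Multiset.card (Polynomial.roots (Matrix.charpoly B) |>.filter (· ≠ 0))
      ≤ ∑ u : V, Matrix.rank (∑ h : ω u, ρ (h : G)) := by
  classical
  intro B
  have key : ∀ u : V,
      Matrix.rank (Matrix.of fun (i : Fin d) (q : V × Fin d) => B (u, i) q)
        ≤ Matrix.rank (∑ h : ω u, ρ (h : G)) := by
    intro u
    set P : Matrix (Fin d) (Fin d) ℂ := ∑ h : ω u, ρ (h : G) with hP
    set M : Matrix (Fin d) (V × Fin d) ℂ :=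
      Matrix.of fun i q =>
        (∑ a ∈ Finset.univ.filter (fun a : A => tail a = u ∧ head a = q.1),
          ρ (α a)) i q.2 with hM
    have hmat : ∀ v : V,
        (∑ a ∈ Finset.univ.filter (fun a : A => tail a = u ∧ head a = v),
          ∑ h : ω u, ρ ((h : G) * α a)) =
        P * (∑ a ∈ Finset.univ.filter (fun a : A => tail a = u ∧ head a = v), ρ (α a)) := by
      intro v
      rw [Finset.mul_sum]
      refine Finset.sum_congr rfl fun a _ => ?_
      rw [hP, Finset.sum_mul]
      exact Finset.sum_congr rfl fun h _ => map_mul ρ _ _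
    have hfac : (Matrix.of fun (i : Fin d) (q : V × Fin d) => B (u, i) q) = P * M := by
      ext i q
      show (∑ a ∈ Finset.univ.filter (fun a : A => tail a = u ∧ head a = q.1),
          ∑ h : ω u, ρ ((h : G) * α a)) i q.2 = (P * M) i q
      rw [hmat q.1]
      rfl
    rw [hfac]
    exact Matrix.rank_mul_le_left P M
  refine ⟨key, ?_⟩
  have hBsum : B = ∑ u : V,
      (Matrix.of fun (p : V × Fin d) (i : Fin d) => if p.1 = u ∧ p.2 = i then (1:ℂ) else 0) *
      (Matrix.of fun (i : Fin d) (q : V × Fin d) => B (u, i) q) := by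
    funext p q
    obtain ⟨v, i⟩ := p
    rw [Matrix.sum_apply]
    have hterm : ∀ u : V,
        ((Matrix.of fun (p : V × Fin d) (j : Fin d) => if p.1 = u ∧ p.2 = j then (1:ℂ) else 0) *
          (Matrix.of fun (j : Fin d) (q : V × Fin d) => B (u, j) q)) (v, i) q
        = if u = v then B (v, i) q else 0 := by
      intro u
      rw [Matrix.mul_apply]
      by_cases h : v = u
      · subst h
        simp
      · simp [h, Ne.symm h]
    rw [Finset.sum_congr rfl fun u _ => hterm u, Finset.sum_ite_eq', if_pos (Finset.mem_univ v)]
  calc Multiset.card ((Matrix.charpoly B).roots.filter (· ≠ 0)) ≤ B.rank := by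
        have h := card_nonzero_roots_le_rank B
        convert h using 3
        congr!
    _ = (∑ u : V,
          (Matrix.of fun (p : V × Fin d) (i : Fin d) => if p.1 = u ∧ p.2 = i then (1:ℂ) else 0) *
          (Matrix.of fun (i : Fin d) (q : V × Fin d) => B (u, i) q)).rank := by
        rw [← hBsum]
    _ ≤ ∑ u : V, Matrix.rank ((Matrix.of fun (p : V × Fin d) (i : Fin d) =>
          if p.1 = u ∧ p.2 = i then (1:ℂ) else 0) *
          (Matrix.of fun (i : Fin d) (q : V × Fin d) => B (u, i) q)) :=
        matrix_rank_sum_le _ _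
    _ ≤ ∑ u : V, Matrix.rank (∑ h : ω u, ρ (h : G)) := by
        apply Finset.sum_le_sum
        intro u _
        exact (Matrix.rank_mul_le_right _ _).trans (key u)
end

section
/- Let Γ be a finite graph on k vertices with combined voltage assignment (α,ω) in a finite group G, ρ an irreducible representation of dimension d, and B(ρ) the dk×dk matrix with blocks (Σ_{h∈G_u} ρ(h))·Σ_{a∈arcs(u,v)} ρ(α(a)). Let f be an eigenvector of B(ρ) for eigenvalue λ satisfying condition (C), and define f⁺(v,hG_v) := ρ(h)f(v). Then for every vertex (u,gG_u) of the factored lift, λ·f⁺(u,gG_u) = Σ over all arcs of the lift emanating from (u,gG_u) of f⁺ evaluated at the corresponding terminal vertices; that is, each coordinate-section of f⁺ is an eigenvector of the adjacency matrix of the factored lift Γ^(α,ω) with eigenvalue λ. -/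
open scoped Classical

/-- Let `f` be an eigenvector of `B(ρ)` for eigenvalue `λ` satisfying
condition (C), and set `f⁺(v, hG_v) := ρ h *ᵥ f v`.  Then for every vertex `(u, gG_u)`
of the factored lift, `λ · f⁺(u, gG_u)` equals the sum, over all arcs `(a, h)` of the
lift emanating from `(u, gG_u)`, of `f⁺` at the corresponding terminal vertices
`(head a, h α(a) G_{head a})`; i.e. each coordinate-section of `f⁺` is an eigenvector
of the adjacency matrix of the factored lift with eigenvalue `λ`. -/
theorem condition_C_lift_eigenvector
    (V A : Type) [Fintype V] [Fintype A]
    (G : Type) [Group G] [Fintype G]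
    (tail head : A → V) (rev : A → A)
    (hrev : ∀ a, rev (rev a) = a) (hrevtail : ∀ a, tail (rev a) = head a)
    (α : A → G) (hα : ∀ a, α (rev a) = (α a)⁻¹)
    (ω : V → Subgroup G)
    (d : ℕ) (ρ : G →* Matrix (Fin d) (Fin d) ℂ)
    (hirr : ∀ W : Submodule ℂ (Fin d → ℂ),
      (∀ g : G, W.map (Matrix.mulVecLin (ρ g)) ≤ W) → W = ⊥ ∨ W = ⊤)
    (B : Matrix (V × Fin d) (V × Fin d) ℂ)
    (hB : B = fun p q =>
      (∑ a ∈ Finset.univ.filter (fun a : A => tail a = p.1 ∧ head a = q.1),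
        ∑ h : ω p.1, ρ ((h : G) * α a)) p.2 q.2)
    (f : V → Fin d → ℂ) (lam : ℂ)
    (hf0 : (fun p : V × Fin d => f p.1 p.2) ≠ 0)
    (heig : B.mulVec (fun p : V × Fin d => f p.1 p.2)
      = lam • (fun p : V × Fin d => f p.1 p.2))
    (hC : ∀ v : V, f v ≠ 0 → ∀ h ∈ ω v, ∀ h' ∈ ω v,
      Matrix.mulVec (ρ h) (f v) = Matrix.mulVec (ρ h') (f v)) :
    ∀ (u : V) (g : G),
      lam • Matrix.mulVec (ρ g) (f u)
        = ∑ p : {p : A × G //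
              tail p.1 = u ∧ (QuotientGroup.mk p.2 : G ⧸ ω u) = QuotientGroup.mk g},
            Matrix.mulVec (ρ ((p : A × G).2 * α (p : A × G).1)) (f (head (p : A × G).1)) := by
  intro u g
  -- fiberwise summation helper
  have hfib : ∀ (F : A → ℂ),
      ∑ v : V, ∑ a ∈ Finset.univ.filter (fun a : A => tail a = u ∧ head a = v), F a
        = ∑ a ∈ Finset.univ.filter (fun a : A => tail a = u), F a := by
    intro F
    have h := Finset.sum_fiberwise_of_maps_to
      (s := Finset.univ.filter (fun a : A => tail a = u))
      (t := (Finset.univ : Finset V)) (g := head)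
      (fun a _ => Finset.mem_univ _) F
    rw [← h]
    refine Finset.sum_congr rfl fun v _ => Finset.sum_congr ?_ fun _ _ => rfl
    rw [Finset.filter_filter]
  -- the eigen-equation, blockwise
  have key : ∀ i : Fin d, lam * f u i
      = ∑ a ∈ Finset.univ.filter (fun a : A => tail a = u),
          ∑ j : Fin d, (∑ h : ω u, ρ ((h : G) * α a)) i j * f (head a) j := by
    intro i
    have h1 := congrFun heig (u, i)
    simp only [Matrix.mulVec, dotProduct, Pi.smul_apply, smul_eq_mul] at h1
    rw [← h1, hB, Fintype.sum_prod_type,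
      ← hfib (fun a => ∑ j : Fin d, (∑ h : ω u, ρ ((h : G) * α a)) i j * f (head a) j)]
    refine Finset.sum_congr rfl fun v _ => ?_
    simp only [Matrix.sum_apply, Finset.sum_mul]
    rw [Finset.sum_comm]
    refine Finset.sum_congr rfl fun a ha => Finset.sum_congr rfl fun j _ =>
      Finset.sum_congr rfl fun h _ => ?_
    rw [(Finset.mem_filter.mp ha).2.2]
  have key2 : lam • f u
      = ∑ a ∈ Finset.univ.filter (fun a : A => tail a = u),
          Matrix.mulVec (∑ h : ω u, ρ ((h : G) * α a)) (f (head a)) := by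
    funext i
    rw [Pi.smul_apply, smul_eq_mul, key i]
    simp [Matrix.mulVec, dotProduct, Finset.sum_apply]
  -- left-hand side
  have lhs : lam • Matrix.mulVec (ρ g) (f u)
      = ∑ a ∈ Finset.univ.filter (fun a : A => tail a = u),
          ∑ h : ω u, Matrix.mulVec (ρ (g * ((h : G) * α a))) (f (head a)) := by
    rw [← Matrix.mulVec_smul, key2, ← Matrix.mulVecLin_apply, map_sum]
    refine Finset.sum_congr rfl fun a _ => ?_
    rw [Matrix.mulVecLin_apply, Matrix.mulVec_mulVec, Finset.mul_sum]
    funext i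
    simp only [Finset.sum_apply, Matrix.mulVec, dotProduct, Matrix.sum_apply,
      Finset.sum_mul, ← map_mul]
    exact Finset.sum_comm
  rw [lhs]
  -- right-hand side: unfold the subtype sum
  rw [← Finset.sum_subtype
    (Finset.univ.filter (fun p : A × G => tail p.1 = u ∧
      (QuotientGroup.mk p.2 : G ⧸ ω u) = QuotientGroup.mk g))
    (by simp) (fun p : A × G =>
      Matrix.mulVec (ρ (p.2 * α p.1)) (f (head p.1)))]
  have hsplit : (Finset.univ.filter (fun p : A × G => tail p.1 = u ∧
      (QuotientGroup.mk p.2 : G ⧸ ω u) = QuotientGroup.mk g))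
      = (Finset.univ.filter (fun a : A => tail a = u)) ×ˢ
        (Finset.univ.filter (fun h : G =>
          (QuotientGroup.mk h : G ⧸ ω u) = QuotientGroup.mk g)) := by
    rw [← Finset.filter_product, Finset.univ_product_univ]
  rw [hsplit, Finset.sum_product]
  refine Finset.sum_congr rfl fun a _ => ?_
  -- change of variables in the coset sum
  refine Finset.sum_bij (fun (h : ω u) _ => g * (h : G)) ?_ ?_ ?_ ?_
  · intro h _
    simp only [Finset.mem_filter, Finset.mem_univ, true_and]
    rw [QuotientGroup.eq]
    simpa using (ω u).inv_mem h.2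
  · intro h₁ _ h₂ _ hgh
    exact Subtype.ext (mul_left_cancel hgh)
  · intro b hb
    simp only [Finset.mem_filter, Finset.mem_univ, true_and, QuotientGroup.eq] at hb
    refine ⟨⟨g⁻¹ * b, ?_⟩, Finset.mem_univ _, by simp⟩
    simpa using (ω u).inv_mem hb
  · intro h _
    rw [mul_assoc]
end
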